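/- For every a ∈ ℤ and every u ∈ ℂ, T^a(u) = T^{N+1−a}(u + s). (In particular both sides vanish unless 0 ≤ a ≤ N+1.) -/

import Mathlib

open Complex

noncomputable def oneSubXD (x w : ℂ → ℂ) : ℂ → ℂ := fun u => w u - x u * w (u + 2)

noncomputable def Lop (x : ℕ → ℂ → ℂ) : ℕ → (ℂ → ℂ) → (ℂ → ℂ)
  | 0 => fun w => w
  | k + 1 => fun w => oneSubXD (x (k + 1)) (Lop x k w)

/-- coefficients of the product (1 - x_m D)⋯(1 - x_1 D), built from the outside. -/
noncomputable def Ccoef (y : ℕ → ℂ → ℂ) : ℕ → ℤ → ℂ → ℂ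
  | 0 => fun a _ => if a = 0 then 1 else 0
  | m + 1 => fun a u => Ccoef y m a u + y (m + 1) u * Ccoef y m (a - 1) (u + 2)

/-- coefficients of the product (M_{r_m} - D)⋯(M_{r_1} - D). -/
noncomputable def Ecoef (r : ℕ → ℂ → ℂ) : ℕ → ℤ → ℂ → ℂ
  | 0 => fun a _ => if a = 0 then 1 else 0
  | m + 1 => fun a u => r (m + 1) u * Ecoef r m a u + Ecoef r m (a - 1) (u + 2)

lemma Ccoef_succ (y : ℕ → ℂ → ℂ) (m : ℕ) (a : ℤ) (u : ℂ) :
    Ccoef y (m + 1) a u = Ccoef y m a u + y (m + 1) u * Ccoef y m (a - 1) (u + 2) := rfl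

lemma Ecoef_succ (r : ℕ → ℂ → ℂ) (m : ℕ) (a : ℤ) (u : ℂ) :
    Ecoef r (m + 1) a u = r (m + 1) u * Ecoef r m a u + Ecoef r m (a - 1) (u + 2) := rfl

lemma Ccoef_eq_zero (y : ℕ → ℂ → ℂ) : ∀ (m : ℕ) (a : ℤ), (a < 0 ∨ (m : ℤ) < a) → ∀ u,
    Ccoef y m a u = 0 := by
  intro m
  induction m with
  | zero => intro a ha u; simp only [Ccoef]; rw [if_neg (by omega)]
  | succ m ih =>
    intro a ha u
    rw [Ccoef_succ, ih a (by omega), ih (a - 1) (by omega)]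
    ring

lemma Ccoef_congr_shift (y y' : ℕ → ℂ → ℂ) (c : ℂ) :
    ∀ (m : ℕ), (∀ k, 1 ≤ k → k ≤ m → ∀ w, y k w = y' k (w + c)) →
    ∀ (a : ℤ) (u : ℂ), Ccoef y m a u = Ccoef y' m a (u + c) := by
  intro m
  induction m with
  | zero => intro _ a u; simp [Ccoef]
  | succ m ih =>
    intro h a u
    rw [Ccoef_succ, Ccoef_succ,
      ih (fun k hk hk2 => h k hk (by omega)) a u,
      ih (fun k hk hk2 => h k hk (by omega)) (a - 1) (u + 2),
      h (m + 1) (by omega) (by omega) u]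
    congr 2
    ring

lemma Ccoef_corec (y : ℕ → ℂ → ℂ) : ∀ (m : ℕ) (a : ℤ) (u : ℂ),
    Ccoef y (m + 1) a u = Ccoef (fun k => y (k + 1)) m a u
      + y 1 (u + 2 * ((a : ℂ) - 1)) * Ccoef (fun k => y (k + 1)) m (a - 1) u := by
  intro m
  induction m with
  | zero =>
    intro a u
    by_cases h0 : a = 0
    · subst h0; simp [Ccoef]
    · by_cases h1 : a = 1
      · subst h1
        simp only [Ccoef]
        norm_num
      · simp only [Ccoef, if_neg h0, if_neg (show ¬ a - 1 = 0 by omega)]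
        ring
  | succ m ih =>
    intro a u
    rw [Ccoef_succ y (m + 1), ih a u, ih (a - 1) (u + 2)]
    have harg : (u + 2) + 2 * (((a - 1 : ℤ) : ℂ) - 1) = u + 2 * ((a : ℂ) - 1) := by
      push_cast; ring
    rw [harg]
    rw [Ccoef_succ (fun k => y (k + 1)) m a u, Ccoef_succ (fun k => y (k + 1)) m (a - 1) u]
    show _ = _ + y 1 _ * (_ + y (m + 1 + 1) u * _)
    ring_nf

lemma Lop_eq (y : ℕ → ℂ → ℂ) : ∀ (k : ℕ) (w : ℂ → ℂ) (u : ℂ),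
    Lop y k w u = ∑ a ∈ Finset.range (k + 1),
      (-1 : ℂ) ^ a * Ccoef y k (a : ℤ) u * w (u + 2 * a) := by
  intro k
  induction k with
  | zero => intro w u; simp [Lop, Ccoef]
  | succ k ih =>
    intro w u
    show Lop y k w u - y (k + 1) u * Lop y k w (u + 2) = _
    rw [ih w u, ih w (u + 2)]
    have step : ∀ a : ℕ, (-1 : ℂ) ^ a * Ccoef y (k + 1) (a : ℤ) u * w (u + 2 * a)
        = (-1 : ℂ) ^ a * Ccoef y k (a : ℤ) u * w (u + 2 * a)
          + (-1 : ℂ) ^ a * (y (k + 1) u * Ccoef y k ((a : ℤ) - 1) (u + 2)) * w (u + 2 * a) := by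
      intro a; rw [Ccoef_succ]; ring
    have e1 : (∑ a ∈ Finset.range (k + 2),
          (-1 : ℂ) ^ a * Ccoef y (k + 1) (a : ℤ) u * w (u + 2 * a))
        = (∑ a ∈ Finset.range (k + 2), (-1 : ℂ) ^ a * Ccoef y k (a : ℤ) u * w (u + 2 * a))
          + ∑ a ∈ Finset.range (k + 2),
            (-1 : ℂ) ^ a * (y (k + 1) u * Ccoef y k ((a : ℤ) - 1) (u + 2)) * w (u + 2 * a) := by
      rw [← Finset.sum_add_distrib]
      exact Finset.sum_congr rfl (fun a _ => step a)
    have e2 : (∑ a ∈ Finset.range (k + 2), (-1 : ℂ) ^ a * Ccoef y k (a : ℤ) u * w (u + 2 * a))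
        = ∑ a ∈ Finset.range (k + 1), (-1 : ℂ) ^ a * Ccoef y k (a : ℤ) u * w (u + 2 * a) := by
      rw [Finset.sum_range_succ, Ccoef_eq_zero y k ((k + 1 : ℕ) : ℤ) (by push_cast; omega) u]
      ring
    have e3 : (∑ a ∈ Finset.range (k + 2),
          (-1 : ℂ) ^ a * (y (k + 1) u * Ccoef y k ((a : ℤ) - 1) (u + 2)) * w (u + 2 * a))
        = - (y (k + 1) u * ∑ a ∈ Finset.range (k + 1),
            (-1 : ℂ) ^ a * Ccoef y k (a : ℤ) (u + 2) * w ((u + 2) + 2 * a)) := by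
      rw [Finset.sum_range_succ']
      have h0 : (-1 : ℂ) ^ (0:ℕ) * (y (k + 1) u * Ccoef y k (((0:ℕ) : ℤ) - 1) (u + 2)) * w (u + 2 * (0:ℕ)) = 0 := by
        rw [Ccoef_eq_zero y k _ (by omega)]; ring
      rw [h0, add_zero, Finset.mul_sum, ← Finset.sum_neg_distrib]
      apply Finset.sum_congr rfl
      intro a _
      have hc : ((a : ℤ) + 1 - 1) = (a : ℤ) := by ring
      have harg : u + 2 * (((a + 1 : ℕ)) : ℂ) = (u + 2) + 2 * a := by push_cast; ring
      push_cast [hc] at harg ⊢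
      rw [harg]
      ring
    rw [e1, e2, e3]
    ring

lemma Ecoef_eq (r : ℕ → ℂ → ℂ) : ∀ (m : ℕ) (b : ℤ) (u : ℂ),
    Ecoef r m b u = Ccoef (fun k w => r (m + 1 - k) (w + 2 * ((k : ℂ) - 1))) m
      ((m : ℤ) - b) (u - 2 * ((m : ℂ) - (b : ℂ) - 1)) := by
  intro m
  induction m with
  | zero =>
    intro b u
    show (if b = 0 then (1:ℂ) else 0) = (if (0:ℤ) - b = 0 then (1:ℂ) else 0)
    congr 1
    simp [sub_eq_zero, eq_comm]
  | succ m ih =>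
    intro b u
    rw [Ecoef_succ]
    rw [Ccoef_corec (fun k w => r (m + 1 + 1 - k) (w + 2 * ((k : ℂ) - 1))) m]
    -- identify the inner shifted sequence with the m-level sequence
    have hseq : ∀ k, 1 ≤ k → k ≤ m → ∀ w,
        (fun k w => r (m + 1 + 1 - k) (w + 2 * ((k : ℂ) - 1))) (k + 1) w
        = (fun k w => r (m + 1 - k) (w + 2 * ((k : ℂ) - 1))) k (w + 2) := by
      intro k hk1 hkm w
      show r (m + 1 + 1 - (k + 1)) (w + 2 * (((k + 1 : ℕ) : ℂ) - 1))
        = r (m + 1 - k) ((w + 2) + 2 * ((k : ℂ) - 1))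
      have : m + 1 + 1 - (k + 1) = m + 1 - k := by omega
      rw [this]
      congr 1
      push_cast
      ring
    have hsh := Ccoef_congr_shift
      (fun k => (fun k w => r (m + 1 + 1 - k) (w + 2 * ((k : ℂ) - 1))) (k + 1))
      (fun k w => r (m + 1 - k) (w + 2 * ((k : ℂ) - 1))) 2 m hseq
    rw [hsh, hsh]
    -- first Ccoef term = Ecoef r m (b-1) (u+2) via ih
    have ih1 := ih (b - 1) (u + 2)
    have ih2 := ih b u
    -- arguments matching
    have ha1 : ((m : ℤ) - (b - 1)) = ((m + 1 : ℕ) : ℤ) - b := by push_cast; ring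
    have hu1 : (u + 2) - 2 * ((m : ℂ) - ((b - 1 : ℤ) : ℂ) - 1)
        = u - 2 * (((m + 1 : ℕ) : ℂ) - (b : ℂ) - 1) + 2 := by push_cast; ring
    rw [ha1, hu1] at ih1
    have ha2 : ((m : ℤ) - b) = ((m + 1 : ℕ) : ℤ) - b - 1 := by push_cast; ring
    have hu2 : u - 2 * ((m : ℂ) - (b : ℂ) - 1)
        = u - 2 * (((m + 1 : ℕ) : ℂ) - (b : ℂ) - 1) + 2 := by push_cast; ring
    rw [ha2, hu2] at ih2
    rw [← ih1, ← ih2]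
    have harg : u - 2 * (((m+1:ℕ):ℂ) - (b:ℂ) - 1) + 2 * ((((((m+1:ℕ):ℤ) - b : ℤ)) : ℂ) - 1)
        + 2 * (((1:ℕ):ℂ) - 1) = u := by push_cast; ring
    rw [harg]
    simp only [Nat.add_sub_cancel]
    ring

noncomputable def Gfun (n : ℕ) (s : ℂ) (Y : ℕ → ℂ → ℂ) : ℕ → ℂ → ℂ :=
  fun k u => if k ≤ n then Y k (u + k) else Y (2 * n + 1 - k) (u + k + s)

noncomputable def rfun (n : ℕ) (s : ℂ) (Y : ℕ → ℂ → ℂ) : ℕ → ℂ → ℂ :=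
  fun k u => Gfun n s Y (k - 1) u / Gfun n s Y k u

theorem duality_A2_even
    (n : ℕ) (hn : 1 ≤ n) (N : ℕ) (hN : N = 2 * n)
    (hbar : ℂ) (hbar_ne : hbar ≠ 0) (s : ℂ)
    (hs : s = (Real.pi : ℂ) * Complex.I / (2 * hbar))
    (Q : ℕ → ℂ → ℂ) (hQ0 : ∀ u, Q 0 u = 1)
    (hQne : ∀ a, 1 ≤ a → a ≤ n → ∀ u, Q a u ≠ 0)
    (hconst : ℕ → ℂ)
    (hQper : ∀ a, 1 ≤ a → a ≤ n → hconst a ≠ 0 ∧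
      ∀ u, Q a (u + (Real.pi : ℂ) * Complex.I / hbar) = hconst a * Q a u)
    (Y : ℕ → ℂ → ℂ) (hY : ∀ a u, Y a u = Q a (u - 1) / Q a (u + 1))
    (x : ℕ → ℂ → ℂ)
    (hxa : ∀ a, 1 ≤ a → a ≤ n → ∀ u : ℂ,
      x a u = Y a (u + a) / Y (a - 1) (u + a + 1))
    (hx0 : ∀ u : ℂ, x (n + 1) u = Y n (u + n + 1 + s) / Y n (u + n + 2))
    (hxbar : ∀ a, 1 ≤ a → a ≤ n → ∀ u : ℂ,
      x (2 * n - a + 2) u = Y (a - 1) (u + 2 * (n : ℂ) - a + 2 + s)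
        / Y a (u + 2 * (n : ℂ) - a + 3 + s))
    (T : ℤ → ℂ → ℂ)
    (hTneg : ∀ a : ℤ, a < 0 → ∀ u, T a u = 0)
    (hTbig : ∀ a : ℤ, (N : ℤ) + 1 < a → ∀ u, T a u = 0)
    (hTL : ∀ w : ℂ → ℂ, ∀ u : ℂ, Lop x (N + 1) w u
      = ∑ a ∈ Finset.range (N + 2), (-1) ^ a * T a (u + a) * w (u + 2 * a))
    :
    ∀ a : ℤ, ∀ u : ℂ, T a u = T ((N : ℤ) + 1 - a) (u + s) := by
  subst hN
  -- ## basic nonvanishing / periodicity facts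
  have hQne' : ∀ a, a ≤ n → ∀ u, Q a u ≠ 0 := by
    intro a ha u
    rcases Nat.eq_zero_or_pos a with h | h
    · subst h; rw [hQ0]; exact one_ne_zero
    · exact hQne a h ha u
  have hYne : ∀ a, a ≤ n → ∀ v : ℂ, Y a v ≠ 0 := by
    intro a ha v
    rw [hY]; exact div_ne_zero (hQne' a ha _) (hQne' a ha _)
  have hY0 : ∀ v : ℂ, Y 0 v = 1 := by
    intro v; rw [hY, hQ0, hQ0]; exact one_div_one
  have hs2 : 2 * s = (Real.pi : ℂ) * Complex.I / hbar := by
    rw [hs]; field_simp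
  have hYper : ∀ a, a ≤ n → ∀ v : ℂ, Y a (v + 2 * s) = Y a v := by
    intro a ha v
    rcases Nat.eq_zero_or_pos a with h | h
    · subst h; rw [hY0, hY0]
    · obtain ⟨hcne, hqp⟩ := hQper a h ha
      rw [hY, hY]
      have e1 : v + 2 * s - 1 = (v - 1) + (Real.pi : ℂ) * Complex.I / hbar := by
        rw [← hs2]; ring
      have e2 : v + 2 * s + 1 = (v + 1) + (Real.pi : ℂ) * Complex.I / hbar := by
        rw [← hs2]; ring
      rw [e1, e2, hqp, hqp, mul_div_mul_left _ _ hcne]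
  have hGne : ∀ k, ∀ u : ℂ, Gfun n s Y k u ≠ 0 := by
    intro k u
    unfold Gfun
    split_ifs with h
    · exact hYne k h _
    · exact hYne (2 * n + 1 - k) (by omega) _
  have hG1 : ∀ v : ℂ, Gfun n s Y (2 * n + 1) v = 1 := by
    intro v
    unfold Gfun
    rw [if_neg (by omega)]
    have h0 : 2 * n + 1 - (2 * n + 1) = 0 := by omega
    rw [h0, hY0]
  -- ## x as a ratio of G's
  have hxG : ∀ k, 1 ≤ k → k ≤ 2 * n + 1 → ∀ u : ℂ,
      x k u = Gfun n s Y k u / Gfun n s Y (k - 1) (u + 2) := by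
    intro k hk1 hk2 u
    rcases (by omega : k ≤ n ∨ k = n + 1 ∨ (n + 2 ≤ k ∧ k ≤ 2 * n + 1)) with h | h | ⟨h1, h2⟩
    · rw [hxa k hk1 h u]
      unfold Gfun
      rw [if_pos h, if_pos (by omega : k - 1 ≤ n)]
      have e1 : u + 2 + ((k - 1 : ℕ) : ℂ) = u + (k : ℂ) + 1 := by
        push_cast [Nat.cast_sub hk1]; ring
      rw [e1]
    · subst h
      rw [hx0 u]
      unfold Gfun
      rw [if_neg (by omega), if_pos (by omega : n + 1 - 1 ≤ n)]
      have i1 : 2 * n + 1 - (n + 1) = n := by omega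
      have i2 : n + 1 - 1 = n := by omega
      rw [i1, i2]
      have e1 : u + ((n + 1 : ℕ) : ℂ) + s = u + (n : ℂ) + 1 + s := by push_cast; ring
      have e2 : u + 2 + (n : ℂ) = u + (n : ℂ) + 2 := by ring
      rw [e1, e2]
    · have ha1 : 1 ≤ 2 * n + 2 - k := by omega
      have ha2 : 2 * n + 2 - k ≤ n := by omega
      have hk' : 2 * n - (2 * n + 2 - k) + 2 = k := by omega
      have hb := hxbar (2 * n + 2 - k) ha1 ha2 u
      rw [hk'] at hb
      rw [hb]
      unfold Gfun
      rw [if_neg (by omega), if_neg (by omega : ¬ k - 1 ≤ n)]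
      have i1 : 2 * n + 2 - k - 1 = 2 * n + 1 - k := by omega
      have i2 : 2 * n + 1 - (k - 1) = 2 * n + 2 - k := by omega
      rw [i1, i2]
      have hca : ((2 * n + 2 - k : ℕ) : ℂ) = 2 * (n : ℂ) + 2 - (k : ℂ) := by
        push_cast [Nat.cast_sub (by omega : k ≤ 2 * n + 2)]; ring
      have hca1 : ((2 * n + 1 - k : ℕ) : ℂ) = 2 * (n : ℂ) + 1 - (k : ℂ) := by
        push_cast [Nat.cast_sub (by omega : k ≤ 2 * n + 1)]; ring
      have e1 : u + 2 * (n : ℂ) - ((2 * n + 2 - k : ℕ) : ℂ) + 2 + s = u + (k : ℂ) + s := by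
        rw [hca]; ring
      have e2 : u + 2 * (n : ℂ) - ((2 * n + 2 - k : ℕ) : ℂ) + 3 + s
          = u + 2 + ((k - 1 : ℕ) : ℂ) + s := by
        rw [hca]; push_cast [Nat.cast_sub hk1]; ring
      rw [e1, e2]
  -- ## the reflection identity for G
  have hGA : ∀ j, j ≤ 2 * n + 1 → ∀ w : ℂ,
      Gfun n s Y (2 * n + 1 - j) (w + 2 * (j : ℂ) - 2)
        = Gfun n s Y j (w + 2 * (n : ℂ) - 1 + s) := by
    intro j hj w
    rcases (by omega : j = 0 ∨ (1 ≤ j ∧ j ≤ n) ∨ j = n + 1 ∨ (n + 2 ≤ j ∧ j ≤ 2 * n + 1))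
      with h | ⟨h1, h2⟩ | h | ⟨h1, h2⟩
    · subst h
      unfold Gfun
      rw [if_neg (by omega), if_pos (by omega : 0 ≤ n)]
      have i0 : 2 * n + 1 - (2 * n + 1 - 0) = 0 := by omega
      rw [i0, hY0, hY0]
    · unfold Gfun
      rw [if_neg (by omega : ¬ 2 * n + 1 - j ≤ n), if_pos h2]
      have i1 : 2 * n + 1 - (2 * n + 1 - j) = j := by omega
      rw [i1]
      congr 1
      push_cast [Nat.cast_sub (by omega : j ≤ 2 * n + 1)]
      ring
    · subst h
      unfold Gfun
      rw [if_pos (by omega : 2 * n + 1 - (n + 1) ≤ n), if_neg (by omega)]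
      have i1 : 2 * n + 1 - (n + 1) = n := by omega
      have i2 : 2 * n + 1 - (n + 1) = n := by omega
      rw [i1]
      have e1 : w + 2 * (n : ℂ) - 1 + s + ((n + 1 : ℕ) : ℂ) + s
          = (w + 2 * (((n + 1 : ℕ)) : ℂ) - 2 + (n : ℂ)) + 2 * s := by push_cast; ring
      rw [e1, hYper n le_rfl]
    · unfold Gfun
      rw [if_pos (by omega : 2 * n + 1 - j ≤ n), if_neg (by omega : ¬ j ≤ n)]
      have e1 : w + 2 * (n : ℂ) - 1 + s + (j : ℂ) + s
          = (w + 2 * (j : ℂ) - 2 + ((2 * n + 1 - j : ℕ) : ℂ)) + 2 * s := by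
        push_cast [Nat.cast_sub (by omega : j ≤ 2 * n + 1)]; ring
      rw [e1, hYper (2 * n + 1 - j) (by omega)]
  -- ## the key reversal identity
  have hstar : ∀ k, 1 ≤ k → k ≤ 2 * n + 1 → ∀ w : ℂ,
      rfun n s Y (2 * n + 1 + 1 - k) (w + 2 * ((k : ℂ) - 1))
        = x k (w + (2 * (n : ℂ) - 1 + s)) := by
    intro k hk1 hk2 w
    unfold rfun
    have i1 : 2 * n + 1 + 1 - k - 1 = 2 * n + 1 - k := by omega
    rw [i1]
    have e1 : w + 2 * ((k : ℂ) - 1) = w + 2 * (k : ℂ) - 2 := by ring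
    rw [e1, hGA k (by omega) w]
    have e2 := hGA (k - 1) (by omega) (w + 2)
    have i2 : 2 * n + 1 - (k - 1) = 2 * n + 1 + 1 - k := by omega
    rw [i2] at e2
    have e3 : w + 2 + 2 * ((k - 1 : ℕ) : ℂ) - 2 = w + 2 * (k : ℂ) - 2 := by
      push_cast [Nat.cast_sub hk1]; ring
    rw [e3] at e2
    rw [e2, hxG k hk1 hk2 (w + (2 * (n : ℂ) - 1 + s))]
    have e4 : w + (2 * (n : ℂ) - 1 + s) = w + 2 * (n : ℂ) - 1 + s := by ring
    rw [e4]
    have e5 : w + 2 * (n : ℂ) - 1 + s + 2 = w + 2 + 2 * (n : ℂ) - 1 + s := by ring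
    rw [e5]
  -- ## gauge relation between Ccoef and Ecoef
  have hCE : ∀ m, m ≤ 2 * n + 1 → ∀ (a : ℤ) (u : ℂ),
      Ccoef x m a u = Gfun n s Y m u * Ecoef (rfun n s Y) m a u := by
    intro m
    induction m with
    | zero =>
      intro _ a u
      have hg0 : Gfun n s Y 0 u = 1 := by
        unfold Gfun
        rw [if_pos (Nat.zero_le n)]
        exact hY0 _
      show (if a = 0 then (1:ℂ) else 0) = _ * (if a = 0 then (1:ℂ) else 0)
      rw [hg0, one_mul]
    | succ m ih =>
      intro hm a u
      rw [Ccoef_succ, Ecoef_succ, ih (by omega) a u, ih (by omega) (a - 1) (u + 2)]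
      have hx' : x (m + 1) u * Gfun n s Y m (u + 2) = Gfun n s Y (m + 1) u := by
        rw [hxG (m + 1) (by omega) (by omega) u]
        simp only [Nat.add_sub_cancel]
        exact div_mul_cancel₀ _ (hGne m (u + 2))
      have hr' : Gfun n s Y (m + 1) u * rfun n s Y (m + 1) u = Gfun n s Y m u := by
        unfold rfun
        simp only [Nat.add_sub_cancel]
        rw [mul_comm, div_mul_cancel₀ _ (hGne (m + 1) u)]
      rw [← hr', ← hx']
      ring
  -- ## extraction of T from the functional relation
  have hinj : ∀ u : ℂ, ∀ b c : ℕ, u + 2 * (b : ℂ) = u + 2 * (c : ℂ) → b = c := by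
    intro u b c hEq
    have h2 : (b : ℂ) = c := mul_left_cancel₀ two_ne_zero (add_left_cancel hEq)
    exact_mod_cast h2
  have hTC : ∀ (a : ℕ), a ≤ 2 * n + 1 → ∀ u : ℂ,
      T (a : ℤ) (u + (a : ℂ)) = Ccoef x (2 * n + 1) (a : ℤ) u := by
    intro a ha u
    have h := hTL (fun v => if v = u + 2 * (a : ℂ) then (1:ℂ) else 0) u
    rw [Lop_eq] at h
    have hL : (∑ b ∈ Finset.range (2 * n + 1 + 1), (-1 : ℂ) ^ b * Ccoef x (2 * n + 1) (b : ℤ) u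
          * (if u + 2 * (b : ℂ) = u + 2 * (a : ℂ) then (1:ℂ) else 0))
        = (-1 : ℂ) ^ a * Ccoef x (2 * n + 1) (a : ℤ) u := by
      rw [Finset.sum_eq_single a]
      · rw [if_pos rfl, mul_one]
      · intro b _ hbne
        rw [if_neg (fun hEq => hbne (hinj u b a hEq)), mul_zero]
      · intro hna
        exact absurd (Finset.mem_range.mpr (by omega)) hna
    have hR : (∑ b ∈ Finset.range (2 * n + 2), (-1 : ℂ) ^ b * T (b : ℤ) (u + (b : ℂ))
          * (if u + 2 * (b : ℂ) = u + 2 * (a : ℂ) then (1:ℂ) else 0))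
        = (-1 : ℂ) ^ a * T (a : ℤ) (u + (a : ℂ)) := by
      rw [Finset.sum_eq_single a]
      · rw [if_pos rfl, mul_one]
      · intro b _ hbne
        rw [if_neg (fun hEq => hbne (hinj u b a hEq)), mul_zero]
      · intro hna
        exact absurd (Finset.mem_range.mpr (by omega)) hna
    have hfin : (-1 : ℂ) ^ a * Ccoef x (2 * n + 1) (a : ℤ) u
        = (-1 : ℂ) ^ a * T (a : ℤ) (u + (a : ℂ)) := by
      rw [← hL, ← hR]
      exact h
    exact (mul_left_cancel₀ (pow_ne_zero a (neg_ne_zero.mpr one_ne_zero)) hfin).symm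
  -- ## final assembly
  intro a u
  by_cases ha0 : a < 0
  · rw [hTneg a ha0 u, hTbig _ (by push_cast; omega) (u + s)]
  by_cases ha1 : ((2 * n : ℕ) : ℤ) + 1 < a
  · rw [hTbig a ha1 u, hTneg _ (by push_cast at ha1 ⊢; omega) (u + s)]
  push_neg at ha0 ha1
  obtain ⟨a', rfl⟩ := Int.eq_ofNat_of_zero_le ha0
  have ha' : a' ≤ 2 * n + 1 := by
    have : ((a' : ℕ) : ℤ) ≤ ((2 * n : ℕ) : ℤ) + 1 := ha1
    omega
  -- left side
  have t1 : T (a' : ℤ) u = Ccoef x (2 * n + 1) (a' : ℤ) (u - (a' : ℂ)) := by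
    have := hTC a' ha' (u - (a' : ℂ))
    rwa [sub_add_cancel] at this
  -- right side
  have hb' : 2 * n + 1 - a' ≤ 2 * n + 1 := by omega
  have hcast : (((2 * n + 1 - a' : ℕ)) : ℤ) = ((2 * n : ℕ) : ℤ) + 1 - (a' : ℤ) := by
    push_cast [Nat.cast_sub (by omega : a' ≤ 2 * n + 1)]; ring
  have hcastC : (((2 * n + 1 - a' : ℕ)) : ℂ) = 2 * (n : ℂ) + 1 - (a' : ℂ) := by
    push_cast [Nat.cast_sub (by omega : a' ≤ 2 * n + 1)]; ring
  have t2 : T (((2 * n : ℕ) : ℤ) + 1 - (a' : ℤ)) (u + s)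
      = Ccoef x (2 * n + 1) (((2 * n + 1 - a' : ℕ)) : ℤ)
        (u + s - (((2 * n + 1 - a' : ℕ)) : ℂ)) := by
    have := hTC (2 * n + 1 - a') hb' (u + s - (((2 * n + 1 - a' : ℕ)) : ℂ))
    rw [sub_add_cancel] at this
    rw [← hcast]
    exact this
  -- the chain of identities
  rw [t1, t2]
  rw [hCE (2 * n + 1) le_rfl (a' : ℤ) (u - (a' : ℂ)), hG1, one_mul]
  rw [Ecoef_eq (rfun n s Y) (2 * n + 1) (a' : ℤ) (u - (a' : ℂ))]
  rw [Ccoef_congr_shift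
      (fun k w => rfun n s Y (2 * n + 1 + 1 - k) (w + 2 * ((k : ℂ) - 1)))
      x (2 * (n : ℂ) - 1 + s) (2 * n + 1) (fun k hk1 hk2 w => hstar k hk1 hk2 w)]
  congr 1
  · rw [hcast]; push_cast; ring
  · rw [hcastC]; push_cast; ring
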